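/- For every integer s \ge 2, the constant K_s = 2^{2s+1} s^2 (3s)!/(2s+1)! satisfies the upper bound K_s \le 2^{2s+1} s^2 (3s)!/(2s+1)! \cdot 2s/(s+2) when K_s is computed via the sum representation; equivalently, \sum_{k=0}^{s-1} (s+k)! (2s-k-1)! / ((2k+2)! (s-k-1)! (2s-2k)! k!) \le (3s)!/(s!(2s+2)!) \cdot 2s/(s+2). -/

import Mathlib

open Finset

/-- Convolution identity: `∑_{k=0}^{n} C(a+k,k) C(b+n-k,n-k) = C(a+b+n+1,n)`. -/
lemma my_conv : ∀ (a b n : ℕ),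
    ∑ k ∈ Finset.range (n + 1), (a + k).choose k * (b + (n - k)).choose (n - k)
      = (a + b + n + 1).choose n := by
  intro a
  induction a with
  | zero =>
    intro b n
    induction n with
    | zero => simp
    | succ n ih =>
      rw [Finset.sum_range_succ']
      have h1 : ∀ i ∈ Finset.range (n + 1),
          (0 + (i + 1)).choose (i + 1) * (b + (n + 1 - (i + 1))).choose (n + 1 - (i + 1))
            = (0 + i).choose i * (b + (n - i)).choose (n - i) := by
        intro i _
        simp [Nat.succ_sub_succ, Nat.choose_self, Nat.zero_add]
      rw [Finset.sum_congr rfl h1, ih]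
      simp only [Nat.zero_add, Nat.choose_zero_right, Nat.sub_zero, one_mul]
      rw [show b + (n + 1) = b + n + 1 from rfl, Nat.choose_succ_succ (b + n + 1) n]
  | succ a ih =>
    intro b n
    induction n with
    | zero => simp
    | succ n ih2 =>
      rw [Finset.sum_range_succ']
      have h1 : ∀ i ∈ Finset.range (n + 1),
          (a + 1 + (i + 1)).choose (i + 1) * (b + (n + 1 - (i + 1))).choose (n + 1 - (i + 1))
            = (a + 1 + i).choose i * (b + (n - i)).choose (n - i)
              + (a + (i + 1)).choose (i + 1) * (b + (n + 1 - (i + 1))).choose (n + 1 - (i + 1)) := by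
        intro i _
        have e : a + 1 + (i + 1) = (a + 1 + i) + 1 := by omega
        rw [e, Nat.choose_succ_succ (a + 1 + i) i, Nat.add_mul]
        congr 2
        · simp [Nat.succ_sub_succ]
        · congr 1
          omega
      rw [Finset.sum_congr rfl h1, Finset.sum_add_distrib, ih2]
      have h2 : (∑ i ∈ Finset.range (n + 1),
            (a + (i + 1)).choose (i + 1) * (b + (n + 1 - (i + 1))).choose (n + 1 - (i + 1)))
          + (a + 1 + 0).choose 0 * (b + (n + 1 - 0)).choose (n + 1 - 0)
          = ∑ k ∈ Finset.range (n + 2), (a + k).choose k * (b + (n + 1 - k)).choose (n + 1 - k) := by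
        conv_rhs => rw [Finset.sum_range_succ']
        simp only [Nat.add_zero, Nat.choose_zero_right, one_mul, Nat.sub_zero]
      rw [add_assoc, h2, ih b (n + 1)]
      rw [add_comm, show a + b + (n + 1) + 1 = a + 1 + b + n + 1 from by omega,
        show a + 1 + b + (n + 1) = a + 1 + b + n + 1 from rfl,
        Nat.choose_succ_succ (a + 1 + b + n + 1) n]
      simp only [Nat.succ_eq_add_one]
      omega

/-- Monotonicity of binomial coefficients up to the middle. -/
lemma my_choose_mono (n a : ℕ) : ∀ b, a ≤ b → 2 * b ≤ n → n.choose a ≤ n.choose b := by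
  intro b hab
  induction b, hab using Nat.le_induction with
  | base => intro _; exact le_rfl
  | succ b hb ihb =>
    intro h2
    exact (ihb (by omega)).trans (Nat.choose_le_succ_of_lt_half_left (by omega))

/-- Termwise bound away from the center. -/
lemma my_tw (s k : ℕ) (hk : k < s) (hne : 2 * k + 2 ≠ s + 1) :
    (2 * s + 2).choose (2 * k + 2) ≤ (2 * s + 2).choose s := by
  by_cases h : 2 * k + 2 ≤ s
  · exact my_choose_mono (2 * s + 2) (2 * k + 2) s h (by omega)
  · have hsymm := Nat.choose_symm (show 2 * k + 2 ≤ 2 * s + 2 by omega)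
    rw [show 2 * s + 2 - (2 * k + 2) = 2 * s - 2 * k from by omega] at hsymm
    rw [← hsymm]
    apply my_choose_mono (2 * s + 2) (2 * s - 2 * k) s _ (by omega)
    omega

/-- Key ratio inequality for the odd case. -/
lemma my_keyAB (m : ℕ) (hm : 1 ≤ m) :
    (3 * m + 1).choose m * (3 * m + 1).choose (2 * m + 1) * (m + 2)
      ≤ 3 * ((3 * m).choose (m - 1) * (3 * m + 2).choose (2 * m + 1)) * (m + 1) := by
  apply Nat.le_of_mul_le_mul_right _ (show 0 < m * (3 * m + 2) by positivity)
  have R1 : (3 * m + 1) * (3 * m).choose (m - 1) = (3 * m + 1).choose m * m := by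
    have := Nat.add_one_mul_choose_eq (3 * m) (m - 1)
    rw [show m - 1 + 1 = m from by omega] at this
    simpa using this
  have R2 : (3 * m + 1).choose (2 * m + 1) * (3 * m + 2)
      = (3 * m + 2).choose (2 * m + 1) * (m + 1) := by
    have := Nat.choose_mul_succ_eq (3 * m + 1) (2 * m + 1)
    rw [show 3 * m + 1 + 1 - (2 * m + 1) = m + 1 from by omega] at this
    simpa using this
  have key : (3 * m + 1) * (m + 2) ≤ 3 * m * (3 * m + 2) := by nlinarith
  calc (3 * m + 1).choose m * (3 * m + 1).choose (2 * m + 1) * (m + 2) * (m * (3 * m + 2))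
      = ((3 * m + 1).choose m * m) * ((3 * m + 1).choose (2 * m + 1) * (3 * m + 2)) * (m + 2) := by
        ring
    _ = ((3 * m + 1) * (3 * m).choose (m - 1)) * ((3 * m + 2).choose (2 * m + 1) * (m + 1))
          * (m + 2) := by rw [R1, R2]
    _ = ((3 * m + 1) * (m + 2)) * ((3 * m).choose (m - 1) * (3 * m + 2).choose (2 * m + 1)
          * (m + 1)) := by ring
    _ ≤ (3 * m * (3 * m + 2)) * ((3 * m).choose (m - 1) * (3 * m + 2).choose (2 * m + 1)
          * (m + 1)) := Nat.mul_le_mul_right _ key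
    _ = 3 * ((3 * m).choose (m - 1) * (3 * m + 2).choose (2 * m + 1)) * (m + 1)
          * (m * (3 * m + 2)) := by ring

/-- The pair inequality at the center for odd `s = 2m+1`. -/
lemma my_pair (m : ℕ) (hm : 1 ≤ m) :
    (3 * m + 1).choose m * (3 * m + 1).choose (2 * m + 1) * (4 * m + 4).choose (2 * m + 2)
      + (3 * m).choose (m - 1) * (3 * m + 2).choose (2 * m + 1) * (4 * m + 4).choose (2 * m)
    ≤ (3 * m + 1).choose m * (3 * m + 1).choose (2 * m + 1) * (4 * m + 4).choose (2 * m + 1)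
      + (3 * m).choose (m - 1) * (3 * m + 2).choose (2 * m + 1) * (4 * m + 4).choose (2 * m + 1)
      := by
  set A := (3 * m + 1).choose m * (3 * m + 1).choose (2 * m + 1) with hA
  set B := (3 * m).choose (m - 1) * (3 * m + 2).choose (2 * m + 1) with hB
  set P := (4 * m + 4).choose (2 * m + 2) with hP
  set Q := (4 * m + 4).choose (2 * m + 1) with hQ
  set R := (4 * m + 4).choose (2 * m) with hR
  apply Nat.le_of_mul_le_mul_right _ (show 0 < (2 * m + 2) * (2 * m + 4) by positivity)
  have r1 : P * (2 * m + 2) = Q * (2 * m + 3) := by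
    have := Nat.choose_succ_right_eq (4 * m + 4) (2 * m + 1)
    rw [show 4 * m + 4 - (2 * m + 1) = 2 * m + 3 from by omega] at this
    simpa using this
  have r2 : Q * (2 * m + 1) = R * (2 * m + 4) := by
    have := Nat.choose_succ_right_eq (4 * m + 4) (2 * m)
    rw [show 4 * m + 4 - 2 * m = 2 * m + 4 from by omega] at this
    simpa using this
  have keyAB : A * (m + 2) ≤ 3 * B * (m + 1) := my_keyAB m hm
  have expand : (A * P + B * R) * ((2 * m + 2) * (2 * m + 4))
      = A * Q * ((2 * m + 3) * (2 * m + 4)) + B * Q * ((2 * m + 1) * (2 * m + 2)) := by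
    calc (A * P + B * R) * ((2 * m + 2) * (2 * m + 4))
        = A * (P * (2 * m + 2)) * (2 * m + 4) + B * (R * (2 * m + 4)) * (2 * m + 2) := by ring
      _ = A * (Q * (2 * m + 3)) * (2 * m + 4) + B * (Q * (2 * m + 1)) * (2 * m + 2) := by
          rw [r1, ← r2]
      _ = A * Q * ((2 * m + 3) * (2 * m + 4)) + B * Q * ((2 * m + 1) * (2 * m + 2)) := by ring
  rw [expand]
  have final : A * ((2 * m + 3) * (2 * m + 4)) + B * ((2 * m + 1) * (2 * m + 2))
      ≤ (A + B) * ((2 * m + 2) * (2 * m + 4)) := by nlinarith [keyAB]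
  calc A * Q * ((2 * m + 3) * (2 * m + 4)) + B * Q * ((2 * m + 1) * (2 * m + 2))
      = (A * ((2 * m + 3) * (2 * m + 4)) + B * ((2 * m + 1) * (2 * m + 2))) * Q := by ring
    _ ≤ ((A + B) * ((2 * m + 2) * (2 * m + 4))) * Q := Nat.mul_le_mul_right _ final
    _ = (A * Q + B * Q) * ((2 * m + 2) * (2 * m + 4)) := by ring

/-- The main natural-number inequality. -/
lemma my_star (s : ℕ) (hs : 2 ≤ s) :
    ∑ k ∈ Finset.range s,
        (s + k).choose k * (2 * s - k - 1).choose s * (2 * s + 2).choose (2 * k + 2)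
      ≤ (3 * s).choose (s - 1) * (2 * s + 2).choose s := by
  have hsum : ∑ k ∈ Finset.range s, (s + k).choose k * (2 * s - k - 1).choose s
      = (3 * s).choose (s - 1) := by
    have h := my_conv s s (s - 1)
    rw [show s - 1 + 1 = s from by omega] at h
    rw [show s + s + (s - 1) + 1 = 3 * s from by omega] at h
    rw [← h]
    apply Finset.sum_congr rfl
    intro k hk
    simp only [Finset.mem_range] at hk
    congr 1
    have h1 : s + (s - 1 - k) = 2 * s - k - 1 := by omega
    have h2 : (2 * s - k - 1) - s = s - 1 - k := by omega
    rw [h1, ← h2, Nat.choose_symm (show s ≤ 2 * s - k - 1 by omega)]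
  set f : ℕ → ℕ := fun k =>
    (s + k).choose k * (2 * s - k - 1).choose s * (2 * s + 2).choose (2 * k + 2) with hf
  set g : ℕ → ℕ := fun k =>
    (s + k).choose k * (2 * s - k - 1).choose s * (2 * s + 2).choose s with hg
  have hgsum : ∑ k ∈ Finset.range s, g k = (3 * s).choose (s - 1) * (2 * s + 2).choose s := by
    rw [← hsum, Finset.sum_mul]
  rw [← hgsum]
  rcases Nat.even_or_odd s with he | ho
  · apply Finset.sum_le_sum
    intro k hk
    simp only [Finset.mem_range] at hk
    apply Nat.mul_le_mul_left
    apply my_tw s k hk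
    obtain ⟨t, rfl⟩ := he
    omega
  · obtain ⟨m, rfl⟩ := ho
    have hm : 1 ≤ m := by omega
    have hmmem : m ∈ Finset.range (2 * m + 1) := by simp; omega
    have hm1mem : m - 1 ∈ (Finset.range (2 * m + 1)).erase m := by
      simp [Finset.mem_erase]; omega
    rw [← Finset.add_sum_erase _ f hmmem, ← Finset.add_sum_erase _ f hm1mem]
    rw [← Finset.add_sum_erase _ g hmmem, ← Finset.add_sum_erase _ g hm1mem]
    have hrest : ∑ k ∈ ((Finset.range (2 * m + 1)).erase m).erase (m - 1), f k
        ≤ ∑ k ∈ ((Finset.range (2 * m + 1)).erase m).erase (m - 1), g k := by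
      apply Finset.sum_le_sum
      intro k hk
      simp only [Finset.mem_erase, Finset.mem_range] at hk
      apply Nat.mul_le_mul_left
      apply my_tw (2 * m + 1) k (by omega)
      omega
    have hpair : f m + f (m - 1) ≤ g m + g (m - 1) := by
      have e1 : f m = (3 * m + 1).choose m * (3 * m + 1).choose (2 * m + 1)
          * (4 * m + 4).choose (2 * m + 2) := by
        simp only [hf]
        rw [show 2 * m + 1 + m = 3 * m + 1 from by omega,
          show 2 * (2 * m + 1) - m - 1 = 3 * m + 1 from by omega,
          show 2 * (2 * m + 1) + 2 = 4 * m + 4 from by omega]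
      have e2 : f (m - 1) = (3 * m).choose (m - 1) * (3 * m + 2).choose (2 * m + 1)
          * (4 * m + 4).choose (2 * m) := by
        simp only [hf]
        rw [show 2 * m + 1 + (m - 1) = 3 * m from by omega,
          show 2 * (2 * m + 1) - (m - 1) - 1 = 3 * m + 2 from by omega,
          show 2 * (2 * m + 1) + 2 = 4 * m + 4 from by omega,
          show 2 * (m - 1) + 2 = 2 * m from by omega]
      have e3 : g m = (3 * m + 1).choose m * (3 * m + 1).choose (2 * m + 1)
          * (4 * m + 4).choose (2 * m + 1) := by
        simp only [hg]
        rw [show 2 * m + 1 + m = 3 * m + 1 from by omega,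
          show 2 * (2 * m + 1) - m - 1 = 3 * m + 1 from by omega,
          show 2 * (2 * m + 1) + 2 = 4 * m + 4 from by omega]
      have e4 : g (m - 1) = (3 * m).choose (m - 1) * (3 * m + 2).choose (2 * m + 1)
          * (4 * m + 4).choose (2 * m + 1) := by
        simp only [hg]
        rw [show 2 * m + 1 + (m - 1) = 3 * m from by omega,
          show 2 * (2 * m + 1) - (m - 1) - 1 = 3 * m + 2 from by omega,
          show 2 * (2 * m + 1) + 2 = 4 * m + 4 from by omega]
      rw [e1, e2, e3, e4]
      exact my_pair m hm
    omega

/-- Per-term factorial identity over ℕ. -/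
lemma my_natid (s k : ℕ) (hk : k < s) :
    (s + k).factorial * (2 * s - k - 1).factorial * (2 * s + 2).factorial
      = (s + k).choose k * (2 * s - k - 1).choose s * (2 * s + 2).choose (2 * k + 2)
        * (s.factorial * s.factorial)
        * ((2 * k + 2).factorial * (s - k - 1).factorial * (2 * s - 2 * k).factorial
            * k.factorial) := by
  have h1 : (s + k).choose k * k.factorial * s.factorial = (s + k).factorial := by
    have := Nat.choose_mul_factorial_mul_factorial (show k ≤ s + k by omega)
    rwa [show s + k - k = s from by omega] at this
  have h2 : (2 * s - k - 1).choose s * s.factorial * (s - k - 1).factorial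
      = (2 * s - k - 1).factorial := by
    have := Nat.choose_mul_factorial_mul_factorial (show s ≤ 2 * s - k - 1 by omega)
    rwa [show 2 * s - k - 1 - s = s - k - 1 from by omega] at this
  have h3 : (2 * s + 2).choose (2 * k + 2) * (2 * k + 2).factorial * (2 * s - 2 * k).factorial
      = (2 * s + 2).factorial := by
    have := Nat.choose_mul_factorial_mul_factorial (show 2 * k + 2 ≤ 2 * s + 2 by omega)
    rwa [show 2 * s + 2 - (2 * k + 2) = 2 * s - 2 * k from by omega] at this
  rw [← h1, ← h2, ← h3]
  ring

/-- Per-term rewriting over ℝ. -/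
lemma my_term_eq (s k : ℕ) (hk : k < s) :
    ((Nat.factorial (s + k) : ℝ) * (Nat.factorial (2 * s - k - 1))) /
          ((Nat.factorial (2 * k + 2)) * (Nat.factorial (s - k - 1)) *
            (Nat.factorial (2 * s - 2 * k)) * (Nat.factorial k))
      = ((s + k).choose k * (2 * s - k - 1).choose s * (2 * s + 2).choose (2 * k + 2) : ℕ)
          * ((s.factorial : ℝ) * s.factorial / (2 * s + 2).factorial) := by
  have hd1 : (0 : ℝ) < (Nat.factorial (2 * k + 2)) * (Nat.factorial (s - k - 1)) *
      (Nat.factorial (2 * s - 2 * k)) * (Nat.factorial k) := by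
    positivity
  have hd2 : (0 : ℝ) < ((2 * s + 2).factorial : ℝ) := by positivity
  rw [mul_div_assoc' _ _ ((2 * s + 2).factorial : ℝ)]
  rw [div_eq_div_iff hd1.ne' hd2.ne']
  have := congrArg (Nat.cast : ℕ → ℝ) (my_natid s k hk)
  push_cast at this ⊢
  linarith [this]

/-- The right-hand side equality over ℝ. -/
lemma my_rhs_eq (s : ℕ) (hs : 2 ≤ s) :
    (((3 * s).choose (s - 1) * (2 * s + 2).choose s : ℕ) : ℝ)
        * ((s.factorial : ℝ) * s.factorial / (2 * s + 2).factorial)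
      = (Nat.factorial (3 * s) : ℝ) /
          ((Nat.factorial s) * (Nat.factorial (2 * s + 2))) *
        ((2 * s : ℝ) / ((s : ℝ) + 2)) := by
  have hc1 : (((3 * s).choose (s - 1) : ℕ) : ℝ)
      = ((3 * s).factorial : ℝ) / ((s - 1).factorial * (2 * s + 1).factorial) := by
    rw [Nat.cast_choose ℝ (show s - 1 ≤ 3 * s by omega)]
    rw [show 3 * s - (s - 1) = 2 * s + 1 from by omega]
  have hc2 : (((2 * s + 2).choose s : ℕ) : ℝ)
      = ((2 * s + 2).factorial : ℝ) / (s.factorial * (s + 2).factorial) := by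
    rw [Nat.cast_choose ℝ (show s ≤ 2 * s + 2 by omega)]
    rw [show 2 * s + 2 - s = s + 2 from by omega]
  have hf1n : s.factorial = s * (s - 1).factorial := by
    have h : s - 1 + 1 = s := by omega
    conv_lhs => rw [← h]
    rw [Nat.factorial_succ, h]
  have hf1 : (s.factorial : ℝ) = (s : ℝ) * (s - 1).factorial := by
    exact_mod_cast congrArg (Nat.cast : ℕ → ℝ) hf1n
  have hf2 : ((s + 2).factorial : ℝ) = (s + 2) * (s + 1) * s.factorial := by
    rw [show s + 2 = (s + 1) + 1 from rfl, Nat.factorial_succ, Nat.factorial_succ]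
    push_cast
    ring
  have hf3 : ((2 * s + 2).factorial : ℝ) = (2 * s + 2) * (2 * s + 1).factorial := by
    rw [show 2 * s + 2 = (2 * s + 1) + 1 from rfl, Nat.factorial_succ]
    push_cast
    ring
  push_cast
  rw [hc1, hc2, hf3, hf2, hf1]
  have p1 : ((s - 1).factorial : ℝ) > 0 := by positivity
  have p2 : ((2 * s + 1).factorial : ℝ) > 0 := by positivity
  have p3 : (s.factorial : ℝ) > 0 := by positivity
  have p4 : ((s + 2).factorial : ℝ) > 0 := by positivity
  have p5 : ((2 * s + 2).factorial : ℝ) > 0 := by positivity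
  have p6 : ((s : ℝ) + 2) > 0 := by positivity
  have p7 : (0:ℝ) < s := by positivity
  rw [hf1] at p3
  field_simp

theorem stmt_3 (s : ℕ) (hs : 2 ≤ s) :
    ∑ k ∈ Finset.range s,
        ((Nat.factorial (s + k) : ℝ) * (Nat.factorial (2 * s - k - 1))) /
          ((Nat.factorial (2 * k + 2)) * (Nat.factorial (s - k - 1)) *
            (Nat.factorial (2 * s - 2 * k)) * (Nat.factorial k)) ≤
      (Nat.factorial (3 * s) : ℝ) /
          ((Nat.factorial s) * (Nat.factorial (2 * s + 2))) *
        ((2 * s : ℝ) / ((s : ℝ) + 2)) := by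
  have hrw : ∑ k ∈ Finset.range s,
        ((Nat.factorial (s + k) : ℝ) * (Nat.factorial (2 * s - k - 1))) /
          ((Nat.factorial (2 * k + 2)) * (Nat.factorial (s - k - 1)) *
            (Nat.factorial (2 * s - 2 * k)) * (Nat.factorial k))
      = ((∑ k ∈ Finset.range s,
          (s + k).choose k * (2 * s - k - 1).choose s * (2 * s + 2).choose (2 * k + 2) : ℕ) : ℝ)
          * ((s.factorial : ℝ) * s.factorial / (2 * s + 2).factorial) := by
    rw [Nat.cast_sum, Finset.sum_mul]
    apply Finset.sum_congr rfl
    intro k hk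
    simp only [Finset.mem_range] at hk
    exact my_term_eq s k hk
  rw [hrw, ← my_rhs_eq s hs]
  apply mul_le_mul_of_nonneg_right
  · exact_mod_cast my_star s hs
  · positivity
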